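/- Let X be a metric space, G a compact metric topological group acting continuously on X, and (C, d) a compact metric space with a topological embedding e : X → C having dense image. Assume that for every g ∈ G there is a continuous map Âg : C → C with Âg ∘ e = e ∘ A(g,·). Then the extended action is jointly sequentially continuous at the identity in the following sense: for every sequence (gᵢ) in G converging to the identity e_G and every sequence (xᵢ) in X with e(xᵢ) → c in C, one has e(A(gᵢ, xᵢ)) → c in C. -/

import Mathlib

open Topology Filter

/-- **Joint sequential continuity at the identity of the extended action.**
If a compact metric group `G` acts continuously on a metric space `X`, `(C, d)` is a
compact metric space with a topological embedding `e : X → C` having dense image,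
and every `A(g, ·)` extends continuously to `C`, then for every sequence `gᵢ → 1` in `G`
and every sequence `xᵢ` in `X` with `e xᵢ → c` in `C`, one has `e (A gᵢ xᵢ) → c`. -/
theorem extended_action_seq_continuous_at_identity
    {X : Type*} [MetricSpace X]
    {G : Type*} [MetricSpace G] [CompactSpace G] [Group G] [IsTopologicalGroup G]
    (A : G → X → X)
    (hA_cont : Continuous fun p : G × X => A p.1 p.2)
    (hA_one : ∀ x : X, A 1 x = x)
    (hA_mul : ∀ (g h : G) (x : X), A (g * h) x = A g (A h x))
    {C : Type*} [MetricSpace C] [CompactSpace C]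
    (e : X → C) (he : Topology.IsEmbedding e) (he_dense : DenseRange e)
    (hext : ∀ g : G, ∃ Ahat : C → C, Continuous Ahat ∧ ∀ x : X, Ahat (e x) = e (A g x)) :
    ∀ (g : ℕ → G) (x : ℕ → X) (c : C),
      Tendsto g atTop (𝓝 (1 : G)) →
      Tendsto (fun i => e (x i)) atTop (𝓝 c) →
      Tendsto (fun i => e (A (g i) (x i))) atTop (𝓝 c) := by
  choose Ahat hAcont hAe using hext
  intro g x c hg hx
  -- the orbit maps
  set f : ℕ → G → C := fun i h => e (A h (x i)) with hf
  have hfcont : ∀ i, Continuous (f i) := by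
    intro i
    exact he.continuous.comp (hA_cont.comp (continuous_id.prodMk continuous_const))
  -- pointwise convergence of `f i` to `fun h => Ahat h c`
  have hfc : ∀ h : G, Tendsto (fun i => f i h) atTop (𝓝 (Ahat h c)) := by
    intro h
    have : (fun i => f i h) = fun i => Ahat h (e (x i)) := by
      funext i; simp [hf, hAe]
    rw [this]
    exact ((hAcont h).tendsto c).comp hx
  -- the Baire category setup
  set F : ℕ → ℕ → Set G := fun m N =>
    {h | ∀ i ≥ N, ∀ j ≥ N, dist (f i h) (f j h) ≤ 1 / (m + 1)} with hF
  have hFclosed : ∀ m N, IsClosed (F m N) := by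
    intro m N
    have : F m N = ⋂ (i : ℕ) (_ : i ≥ N) (j : ℕ) (_ : j ≥ N),
        {h | dist (f i h) (f j h) ≤ 1 / (m + 1)} := by
      ext h; simp [hF, Set.mem_iInter]
    rw [this]
    refine isClosed_iInter fun i => isClosed_iInter fun _ =>
      isClosed_iInter fun j => isClosed_iInter fun _ => ?_
    exact isClosed_le (Continuous.dist (hfcont i) (hfcont j)) continuous_const
  have hFcover : ∀ m, (⋃ N, F m N) = Set.univ := by
    intro m
    refine Set.eq_univ_of_forall fun h => ?_
    have hpos : (0 : ℝ) < 1 / (m + 1) / 2 := by positivity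
    obtain ⟨N, hN⟩ := (Metric.tendsto_atTop.mp (hfc h)) _ hpos
    refine Set.mem_iUnion.mpr ⟨N, fun i hi j hj => ?_⟩
    calc dist (f i h) (f j h) ≤ dist (f i h) (Ahat h c) + dist (f j h) (Ahat h c) :=
          dist_triangle_right _ _ _
      _ ≤ 1 / (m + 1) / 2 + 1 / (m + 1) / 2 := add_le_add (hN i hi).le (hN j hj).le
      _ = 1 / (m + 1) := by ring
  -- the residual set and the point h₀
  have hdense : Dense (⋂ m, ⋃ N, interior (F m N)) := by
    refine dense_iInter_of_isOpen (fun m => isOpen_iUnion fun N => isOpen_interior)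
      fun m => dense_iUnion_interior_of_closed (hFclosed m) (hFcover m)
  obtain ⟨h₀, hh₀⟩ := hdense.nonempty
  -- the inverse extension, pulled back identities
  set B : C → C := Ahat h₀⁻¹ with hB
  have hBe : ∀ (h : G) (z : X), B (e (A h z)) = e (A (h₀⁻¹ * h) z) := by
    intro h z
    rw [hB, hAe, hA_mul]
  have hBuc : UniformContinuous B := CompactSpace.uniformContinuous_of_continuous (hAcont _)
  -- key: dist (e (A (g i) (x i))) (e (x i)) → 0
  have hD : Tendsto (fun i => dist (e (A (g i) (x i))) (e (x i))) atTop (𝓝 0) := by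
    rw [Metric.tendsto_nhds]
    intro ε hε
    obtain ⟨δ, hδpos, hδ⟩ := Metric.uniformContinuous_iff.mp hBuc ε hε
    obtain ⟨m, hm⟩ := exists_nat_gt (3 / δ)
    have hmδ : 3 / (m + 1) < δ := by
      rw [div_lt_iff₀ (by positivity)]
      rw [div_lt_iff₀ hδpos] at hm
      nlinarith
    obtain ⟨N, hN⟩ := Set.mem_iUnion.mp (Set.mem_iInter.mp hh₀ m)
    -- eventually h₀ * g i ∈ interior (F m N)
    have hmul : Tendsto (fun i => h₀ * g i) atTop (𝓝 h₀) := by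
      have hmc : Tendsto (fun y : G => h₀ * y) (𝓝 1) (𝓝 h₀) := by
        simpa using (continuous_mul_left h₀).tendsto (1 : G)
      exact hmc.comp hg
    have hev1 : ∀ᶠ i in atTop, h₀ * g i ∈ interior (F m N) :=
      hmul.eventually (isOpen_interior.eventually_mem hN)
    -- eventually f N (h₀ * g i) is close to f N h₀
    have hev2 : ∀ᶠ i in atTop, dist (f N (h₀ * g i)) (f N h₀) < 1 / (m + 1) := by
      have : Tendsto (fun i => f N (h₀ * g i)) atTop (𝓝 (f N h₀)) :=
        ((hfcont N).tendsto h₀).comp hmul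
      exact (Metric.tendsto_nhds.mp this) _ (by positivity)
    filter_upwards [hev1, hev2, eventually_ge_atTop N] with i h1 h2 hiN
    have hh₀F : h₀ ∈ F m N := interior_subset hN
    have hgF : h₀ * g i ∈ F m N := interior_subset h1
    have key : dist (f i (h₀ * g i)) (f i h₀) < δ := by
      calc dist (f i (h₀ * g i)) (f i h₀)
          ≤ dist (f i (h₀ * g i)) (f N (h₀ * g i)) + dist (f N (h₀ * g i)) (f N h₀)
            + dist (f N h₀) (f i h₀) := dist_triangle4 _ _ _ _
        _ < 1 / (m + 1) + 1 / (m + 1) + 1 / (m + 1) := by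
            have t1 := hgF i hiN N le_rfl
            have t3 := hh₀F N le_rfl i hiN
            linarith
        _ = 3 / (m + 1) := by ring
        _ < δ := hmδ
    have hkey2 : dist (B (f i (h₀ * g i))) (B (f i h₀)) < ε := hδ key
    have e1 : B (f i (h₀ * g i)) = e (A (g i) (x i)) := by
      rw [hf]; simp only []
      rw [hBe]
      congr 1
      rw [inv_mul_cancel_left]
    have e2 : B (f i h₀) = e (x i) := by
      rw [hf]; simp only []
      rw [hBe, inv_mul_cancel, hA_one]
    rw [e1, e2] at hkey2
    simpa [Real.dist_eq, abs_of_nonneg dist_nonneg] using hkey2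
  -- combine
  rw [tendsto_iff_dist_tendsto_zero]
  have hx0 : Tendsto (fun i => dist (e (x i)) c) atTop (𝓝 0) :=
    tendsto_iff_dist_tendsto_zero.mp hx
  have := hD.add hx0
  rw [add_zero] at this
  exact squeeze_zero (fun i => dist_nonneg)
    (fun i => dist_triangle (e (A (g i) (x i))) (e (x i)) c) this
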